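/- Let ξ₁ ∈ ℂ with Im ξ₁ ≠ 0, and let (f₁, f₂)ᵀ be a nonvanishing solution of f₁,x = -iξ₁f₁ + ũf₂, f₂,x = -conj(ũ)f₁ + iξ₁f₂ (the spatial Lax system at λ = ξ₁ with potential ũ). Define u = ũ - 2i(ξ₁ - conj(ξ₁))·f₁·conj(f₂)/(|f₁|² + |f₂|²). Then u_x - ũ_x = -2i·Re(ξ₁)·(u - ũ) - (u + ũ)·√(4(Im ξ₁)² - |u - ũ|²). -/

import Mathlib

open Complex

/-- The Darboux-dressed field
`u = ũ - 2i(ξ - ξ̄) f₁ f̄₂ / (|f₁|² + |f₂|²)`. -/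
noncomputable def dressed (ξ : ℂ) (v f₁ f₂ : ℝ → ℝ → ℂ) : ℝ → ℝ → ℂ := fun x t =>
  v x t - 2 * Complex.I * (ξ - (starRingEnd ℂ) ξ) * f₁ x t * (starRingEnd ℂ) (f₂ x t)
    / ((Complex.normSq (f₁ x t) + Complex.normSq (f₂ x t) : ℝ) : ℂ)

/-- if `(f₁, f₂)` is a nonvanishing solution of the spatial Lax system at
`λ = ξ₁` with potential `ũ`, then the Darboux-dressed field `u` satisfies
`u_x - ũ_x = -2i Re(ξ₁)(u - ũ) - (u + ũ)√(4(Im ξ₁)² - |u - ũ|²)`, the square root being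
taken with the branch `√(4(Im ξ₁)² - |u-ũ|²) = 2 Im(ξ₁)(|f₁|² - |f₂|²)/(|f₁|² + |f₂|²)`. -/
theorem stmt_16 (ξ : ℂ) (hξ : ξ.im ≠ 0) (v vx f₁ f₂ : ℝ → ℝ → ℂ)
    (hpos : ∀ x t, 0 < Complex.normSq (f₁ x t) + Complex.normSq (f₂ x t))
    (hvx : ∀ x t, HasDerivAt (fun y => v y t) (vx x t) x)
    -- the spatial Lax system at λ = ξ with potential ũ = v
    (hf₁ : ∀ x t, HasDerivAt (fun y => f₁ y t)
      (-Complex.I * ξ * f₁ x t + v x t * f₂ x t) x)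
    (hf₂ : ∀ x t, HasDerivAt (fun y => f₂ y t)
      (-(starRingEnd ℂ) (v x t) * f₁ x t + Complex.I * ξ * f₂ x t) x) :
    ∀ x t,
      deriv (fun y => dressed ξ v f₁ f₂ y t) x - vx x t
        = -2 * Complex.I * ((ξ.re : ℝ) : ℂ) * (dressed ξ v f₁ f₂ x t - v x t)
          - (dressed ξ v f₁ f₂ x t + v x t)
            * ((2 * ξ.im * (Complex.normSq (f₁ x t) - Complex.normSq (f₂ x t))
                / (Complex.normSq (f₁ x t) + Complex.normSq (f₂ x t)) : ℝ) : ℂ) := by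
  intro x t
  set c : ℂ := (starRingEnd ℂ) ξ with hc
  -- denominator facts
  have hdeneq : ∀ y : ℝ, ((Complex.normSq (f₁ y t) + Complex.normSq (f₂ y t) : ℝ) : ℂ)
      = f₁ y t * (starRingEnd ℂ) (f₁ y t) + f₂ y t * (starRingEnd ℂ) (f₂ y t) := by
    intro y
    push_cast
    rw [Complex.mul_conj, Complex.mul_conj]
  have hN0 : f₁ x t * (starRingEnd ℂ) (f₁ x t) + f₂ x t * (starRingEnd ℂ) (f₂ x t) ≠ 0 := by
    rw [← hdeneq x]
    exact_mod_cast (hpos x t).ne'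
  -- rewrite the dressed field without real casts
  have hfun : (fun y => dressed ξ v f₁ f₂ y t) = fun y =>
      v y t - 2 * Complex.I * (ξ - c) * f₁ y t * (starRingEnd ℂ) (f₂ y t)
        / (f₁ y t * (starRingEnd ℂ) (f₁ y t) + f₂ y t * (starRingEnd ℂ) (f₂ y t)) := by
    funext y
    rw [dressed, hdeneq y]
  -- derivatives
  have hstar₁ : HasDerivAt (fun y => (starRingEnd ℂ) (f₁ y t))
      ((starRingEnd ℂ) (-Complex.I * ξ * f₁ x t + v x t * f₂ x t)) x := (hf₁ x t).star
  have hstar₂ : HasDerivAt (fun y => (starRingEnd ℂ) (f₂ y t))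
      ((starRingEnd ℂ) (-(starRingEnd ℂ) (v x t) * f₁ x t + Complex.I * ξ * f₂ x t)) x :=
    (hf₂ x t).star
  have hnum : HasDerivAt
      (fun y => 2 * Complex.I * (ξ - c) * f₁ y t * (starRingEnd ℂ) (f₂ y t))
      ((2 * Complex.I * (ξ - c) * (-Complex.I * ξ * f₁ x t + v x t * f₂ x t))
          * (starRingEnd ℂ) (f₂ x t)
        + (2 * Complex.I * (ξ - c) * f₁ x t)
          * (starRingEnd ℂ) (-(starRingEnd ℂ) (v x t) * f₁ x t + Complex.I * ξ * f₂ x t)) x := by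
    exact (((hf₁ x t).const_mul (2 * Complex.I * (ξ - c))).mul hstar₂)
  have hden : HasDerivAt
      (fun y => f₁ y t * (starRingEnd ℂ) (f₁ y t) + f₂ y t * (starRingEnd ℂ) (f₂ y t))
      ((-Complex.I * ξ * f₁ x t + v x t * f₂ x t) * (starRingEnd ℂ) (f₁ x t)
        + f₁ x t * (starRingEnd ℂ) (-Complex.I * ξ * f₁ x t + v x t * f₂ x t)
        + ((-(starRingEnd ℂ) (v x t) * f₁ x t + Complex.I * ξ * f₂ x t)
            * (starRingEnd ℂ) (f₂ x t)
          + f₂ x t * (starRingEnd ℂ) (-(starRingEnd ℂ) (v x t) * f₁ x t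
              + Complex.I * ξ * f₂ x t))) x :=
    ((hf₁ x t).mul hstar₁).add ((hf₂ x t).mul hstar₂)
  have hD : deriv (fun y => v y t - 2 * Complex.I * (ξ - c) * f₁ y t * (starRingEnd ℂ) (f₂ y t)
      / (f₁ y t * (starRingEnd ℂ) (f₁ y t) + f₂ y t * (starRingEnd ℂ) (f₂ y t))) x = _ :=
    ((hvx x t).sub (hnum.div hden hN0)).deriv
  rw [hfun, hD, dressed, hdeneq x]
  -- expand conjugates of the Lax right-hand sides
  simp only [map_add, map_mul, map_neg, Complex.conj_conj, Complex.conj_I]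
  -- real casts on the right-hand side
  have hre : ((ξ.re : ℝ) : ℂ) = (ξ + c) / 2 := by
    rw [hc, Complex.add_conj]; push_cast; ring
  have him : ((ξ.im : ℝ) : ℂ) = -(ξ - c) * Complex.I / 2 := by
    rw [hc, Complex.sub_conj]; push_cast
    linear_combination ((ξ.im : ℝ) : ℂ) * Complex.I_mul_I
  push_cast
  simp only [← Complex.mul_conj]
  rw [hre, him]
  field_simp
  ring
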